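/- Let 0 < γ < 1, y ≥ 0 and ε > 0. Define f(n) = (1 - 1/(n+1))^{(1+y)/γ} · (1 + (ε/n)(n/(n+1))^{-y}) for real n ≥ 1. If ε is small enough (depending only on γ and y), then f(n) ≤ 1 for all n ≥ 1. -/

import Mathlib

open Real

theorem stmt_3 (γ y : ℝ) (hγ0 : 0 < γ) (hγ1 : γ < 1) (hy : 0 ≤ y) :
    ∃ ε₀ : ℝ, 0 < ε₀ ∧ ∀ ε : ℝ, 0 < ε → ε ≤ ε₀ → ∀ t : ℝ, 1 ≤ t →
      (1 - 1 / (t + 1)) ^ ((1 + y) / γ) * (1 + (ε / t) * (t / (t + 1)) ^ (-y)) ≤ 1 := by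
  refine ⟨1, one_pos, fun ε hε hε1 t ht => ?_⟩
  have ht0 : (0:ℝ) < t := lt_of_lt_of_le one_pos ht
  have ht1 : (0:ℝ) < t + 1 := by linarith
  have heq : 1 - 1 / (t + 1) = t / (t + 1) := by field_simp; ring
  rw [heq]
  set a := t / (t + 1) with hadef
  have ha0 : (0:ℝ) < a := div_pos ht0 ht1
  have ha1 : a ≤ 1 := by rw [hadef, div_le_one ht1]; linarith
  have hcy : (1:ℝ) + y ≤ (1 + y) / γ := by
    rw [le_div_iff₀ hγ0]; nlinarith
  have hc : (1:ℝ) ≤ (1 + y) / γ := by linarith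
  have key1 : a ^ ((1 + y) / γ) ≤ a := by
    calc a ^ ((1 + y) / γ) ≤ a ^ (1:ℝ) :=
          rpow_le_rpow_of_exponent_ge ha0 ha1 hc
      _ = a := rpow_one a
  have key2 : a ^ ((1 + y) / γ - y) ≤ a := by
    calc a ^ ((1 + y) / γ - y) ≤ a ^ (1:ℝ) :=
          rpow_le_rpow_of_exponent_ge ha0 ha1 (by linarith)
      _ = a := rpow_one a
  have hprod : a ^ ((1 + y) / γ) * a ^ (-y) = a ^ ((1 + y) / γ - y) := by
    rw [← rpow_add ha0]; ring_nf
  have expand : a ^ ((1 + y) / γ) * (1 + ε / t * a ^ (-y))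
      = a ^ ((1 + y) / γ) + (ε / t) * (a ^ ((1 + y) / γ) * a ^ (-y)) := by ring
  rw [expand, hprod]
  have hεt : (ε / t) * a ^ ((1 + y) / γ - y) ≤ (1 / t) * a := by
    apply mul_le_mul
    · exact div_le_div_of_nonneg_right hε1 ht0.le
    · exact key2
    · positivity
    · positivity
  have hfin : a + (1 / t) * a = 1 := by
    rw [hadef]; field_simp
  linarith
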